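/- Suppose there is r_max ≥ 0 with 0 ≤ r_t(s) ≤ r_max for all t ∈ {1,…,H} and s ∈ S. Then for all 1 ≤ i ≤ j ≤ H and all s ∈ S, 0 ≤ Σ_{t=i}^{j} (P_{i:t−1} σ²_{t:j})(s) ≤ (j−i+1)² · r_max² ≤ H² · r_max². -/
import Mathlib


open Finset

/-- The operator `(P_t f)(s) = ∑_{s'} p_t(s,s') f(s')` induced by transition matrices `p`. -/
noncomputable def Pop {S : Type*} [Fintype S] (p : ℕ → S → S → ℝ) (t : ℕ) (f : S → ℝ) (s : S) : ℝ :=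
  ∑ s', p t s s' * f s'

/-- The multi-step operator `P_{i:j} = P_i P_{i+1} ⋯ P_j` (identity when `j < i`). -/
noncomputable def PC {S : Type*} [Fintype S] (p : ℕ → S → S → ℝ) (i j : ℕ) (f : S → ℝ) : S → ℝ :=
  (List.range' i (j + 1 - i)).foldr (fun t g => Pop p t g) f

/-- The value function: `V_{j:j} = r_j`, `V_{i:j} = r_i + P_i V_{i+1:j}` for `i < j`. -/
noncomputable def Vf {S : Type*} [Fintype S] (p : ℕ → S → S → ℝ) (r : ℕ → S → ℝ)
    (i j : ℕ) : S → ℝ :=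
  if _h : i < j then fun s => r i s + Pop p i (Vf p r (i + 1) j) s
  else r j
termination_by j - i
decreasing_by omega

/-- The local variance of the value function:
`σ²_{i:j}(s) = ∑_{s'} p_i(s,s') (V_{i+1:j}(s') − (P_i V_{i+1:j})(s))²` for `i < j`, and `0` else. -/
noncomputable def sigmaSq {S : Type*} [Fintype S] (p : ℕ → S → S → ℝ) (r : ℕ → S → ℝ)
    (i j : ℕ) (s : S) : ℝ :=
  if i < j then
    ∑ s', p i s s' * (Vf p r (i + 1) j s' - Pop p i (Vf p r (i + 1) j) s) ^ 2
  else 0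
section Aux

variable {S : Type*} [Fintype S]

lemma Pop_nonneg {p : ℕ → S → S → ℝ} {t : ℕ} {f : S → ℝ} {s : S}
    (hp : ∀ s', 0 ≤ p t s s') (hf : ∀ s', 0 ≤ f s') : 0 ≤ Pop p t f s :=
  Finset.sum_nonneg fun s' _ => mul_nonneg (hp s') (hf s')

lemma Pop_le {p : ℕ → S → S → ℝ} {t : ℕ} {f : S → ℝ} {s : S} {c : ℝ}
    (hp : ∀ s', 0 ≤ p t s s') (hsum : ∑ s', p t s s' = 1)
    (hf : ∀ s', f s' ≤ c) : Pop p t f s ≤ c := by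
  calc Pop p t f s ≤ ∑ s', p t s s' * c :=
        Finset.sum_le_sum fun s' _ => mul_le_mul_of_nonneg_left (hf s') (hp s')
  _ = c := by rw [← Finset.sum_mul, hsum, one_mul]

lemma Pop_congr {p : ℕ → S → S → ℝ} {t : ℕ} {f g : S → ℝ} {s : S}
    (h : ∀ s', f s' = g s') : Pop p t f s = Pop p t g s := by
  unfold Pop; exact Finset.sum_congr rfl fun s' _ => by rw [h s']

lemma Pop_sub (p : ℕ → S → S → ℝ) (t : ℕ) (f g : S → ℝ) (s : S) :
    Pop p t (fun s' => f s' - g s') s = Pop p t f s - Pop p t g s := by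
  unfold Pop
  rw [← Finset.sum_sub_distrib]
  exact Finset.sum_congr rfl fun s' _ => by ring

lemma Pop_finsum {ι : Type*} (p : ℕ → S → S → ℝ) (t : ℕ) (A : Finset ι) (g : ι → S → ℝ) (s : S) :
    Pop p t (fun s' => ∑ x ∈ A, g x s') s = ∑ x ∈ A, Pop p t (g x) s := by
  unfold Pop
  rw [Finset.sum_comm]
  exact Finset.sum_congr rfl fun s' _ => by rw [Finset.mul_sum]

lemma PC_id {p : ℕ → S → S → ℝ} {i j : ℕ} (h : j + 1 ≤ i) (f : S → ℝ) :
    PC p i j f = f := by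
  unfold PC
  have h0 : j + 1 - i = 0 := by omega
  rw [h0]; simp

lemma PC_step {p : ℕ → S → S → ℝ} {i j : ℕ} (h : i ≤ j) (f : S → ℝ) :
    PC p i j f = Pop p i (PC p (i+1) j f) := by
  unfold PC
  have h1 : j + 1 - i = (j + 1 - (i+1)) + 1 := by omega
  rw [h1, List.range'_succ]
  simp

/-- Second moment of the return. -/
noncomputable def Mf (p : ℕ → S → S → ℝ) (r : ℕ → S → ℝ) (i j : ℕ) : S → ℝ :=
  if _h : i < j then fun s =>
    r i s ^ 2 + 2 * r i s * Pop p i (Vf p r (i + 1) j) s + Pop p i (Mf p r (i + 1) j) s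
  else fun s => r j s ^ 2
termination_by j - i
decreasing_by omega

/-- Variance of the return. -/
noncomputable def Varf (p : ℕ → S → S → ℝ) (r : ℕ → S → ℝ) (i j : ℕ) : S → ℝ :=
  if _h : i < j then fun s => sigmaSq p r i j s + Pop p i (Varf p r (i + 1) j) s
  else 0
termination_by j - i
decreasing_by omega

variable {H : ℕ} {r : ℕ → S → ℝ} {p : ℕ → S → S → ℝ} {rmax : ℝ}

lemma Vf_bound (hp_nonneg : ∀ t, 1 ≤ t → t ≤ H → ∀ s s', 0 ≤ p t s s')
    (hp_sum : ∀ t, 1 ≤ t → t ≤ H → ∀ s, ∑ s', p t s s' = 1)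
    (hrmax : 0 ≤ rmax)
    (hr : ∀ t, 1 ≤ t → t ≤ H → ∀ s : S, 0 ≤ r t s ∧ r t s ≤ rmax) :
    ∀ k i j, 1 ≤ i → i ≤ j → j ≤ H → j - i = k → ∀ s : S,
      0 ≤ Vf p r i j s ∧ Vf p r i j s ≤ ((j - i + 1 : ℕ) : ℝ) * rmax := by
  intro k
  induction k with
  | zero =>
    intro i j hi hij hj hk s
    have hij' : i = j := by omega
    subst hij'
    rw [Vf]; simp only [lt_irrefl, dif_neg, not_false_iff]
    have := hr i hi hj s
    constructor
    · exact this.1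
    · have h1 : ((i - i + 1 : ℕ) : ℝ) = 1 := by norm_num
      rw [h1, one_mul]; exact this.2
  | succ k ih =>
    intro i j hi hij hj hk s
    have hij' : i < j := by omega
    have hiH : i ≤ H := by omega
    rw [Vf]; simp only [dif_pos hij']
    have IH := fun s => ih (i+1) j (by omega) (by omega) hj (by omega) s
    have hrs := hr i hi hiH s
    have hpop0 : 0 ≤ Pop p i (Vf p r (i+1) j) s :=
      Pop_nonneg (hp_nonneg i hi hiH s) (fun s' => (IH s').1)
    have hpop1 : Pop p i (Vf p r (i+1) j) s ≤ ((j - (i+1) + 1 : ℕ) : ℝ) * rmax :=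
      Pop_le (hp_nonneg i hi hiH s) (hp_sum i hi hiH s) (fun s' => (IH s').2)
    constructor
    · exact add_nonneg hrs.1 hpop0
    · have hcast : ((j - i + 1 : ℕ) : ℝ) = ((j - (i+1) + 1 : ℕ) : ℝ) + 1 := by
        have : j - i + 1 = (j - (i+1) + 1) + 1 := by omega
        rw [this]; push_cast; ring
      rw [hcast]
      have := hrs.2
      nlinarith

lemma Mf_bound (hp_nonneg : ∀ t, 1 ≤ t → t ≤ H → ∀ s s', 0 ≤ p t s s')
    (hp_sum : ∀ t, 1 ≤ t → t ≤ H → ∀ s, ∑ s', p t s s' = 1)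
    (hrmax : 0 ≤ rmax)
    (hr : ∀ t, 1 ≤ t → t ≤ H → ∀ s : S, 0 ≤ r t s ∧ r t s ≤ rmax) :
    ∀ k i j, 1 ≤ i → i ≤ j → j ≤ H → j - i = k → ∀ s : S,
      0 ≤ Mf p r i j s ∧ Mf p r i j s ≤ (((j - i + 1 : ℕ) : ℝ) * rmax) ^ 2 := by
  intro k
  induction k with
  | zero =>
    intro i j hi hij hj hk s
    have hij' : i = j := by omega
    subst hij'
    rw [Mf]; simp only [lt_irrefl, dif_neg, not_false_iff]
    have := hr i hi hj s
    constructor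
    · positivity
    · have h1 : ((i - i + 1 : ℕ) : ℝ) = 1 := by norm_num
      rw [h1, one_mul]
      exact pow_le_pow_left₀ this.1 this.2 2
  | succ k ih =>
    intro i j hi hij hj hk s
    have hij' : i < j := by omega
    have hiH : i ≤ H := by omega
    rw [Mf]; simp only [dif_pos hij']
    have IH := fun s => ih (i+1) j (by omega) (by omega) hj (by omega) s
    have VB := Vf_bound hp_nonneg hp_sum hrmax hr (j - (i+1)) (i+1) j (by omega) (by omega) hj rfl
    have hrs := hr i hi hiH s
    have hpop0 : 0 ≤ Pop p i (Vf p r (i+1) j) s :=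
      Pop_nonneg (hp_nonneg i hi hiH s) (fun s' => (VB s').1)
    have hpop1 : Pop p i (Vf p r (i+1) j) s ≤ ((j - (i+1) + 1 : ℕ) : ℝ) * rmax :=
      Pop_le (hp_nonneg i hi hiH s) (hp_sum i hi hiH s) (fun s' => (VB s').2)
    have hM0 : 0 ≤ Pop p i (Mf p r (i+1) j) s :=
      Pop_nonneg (hp_nonneg i hi hiH s) (fun s' => (IH s').1)
    have hM1 : Pop p i (Mf p r (i+1) j) s ≤ (((j - (i+1) + 1 : ℕ) : ℝ) * rmax) ^ 2 :=
      Pop_le (hp_nonneg i hi hiH s) (hp_sum i hi hiH s) (fun s' => (IH s').2)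
    have ha : (0:ℝ) ≤ ((j - (i+1) + 1 : ℕ) : ℝ) := Nat.cast_nonneg _
    constructor
    · nlinarith [hrs.1, sq_nonneg (r i s)]
    · have hcast : ((j - i + 1 : ℕ) : ℝ) = ((j - (i+1) + 1 : ℕ) : ℝ) + 1 := by
        have : j - i + 1 = (j - (i+1) + 1) + 1 := by omega
        rw [this]; push_cast; ring
      rw [hcast]
      nlinarith [hrs.1, hrs.2, mul_le_mul hrs.2 hpop1 hpop0 hrmax]

lemma sigmaSq_nonneg (hp_nonneg : ∀ t, 1 ≤ t → t ≤ H → ∀ s s', 0 ≤ p t s s')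
    {i j : ℕ} (hi : 1 ≤ i) (hj : j ≤ H) (s : S) : 0 ≤ sigmaSq p r i j s := by
  unfold sigmaSq
  split
  · exact Finset.sum_nonneg fun s' _ =>
      mul_nonneg (hp_nonneg i hi (by omega) s s') (sq_nonneg _)
  · exact le_refl 0

lemma sigmaSq_eq (hp_sum : ∀ t, 1 ≤ t → t ≤ H → ∀ s, ∑ s', p t s s' = 1)
    {i j : ℕ} (hi : 1 ≤ i) (hij : i < j) (hj : j ≤ H) (s : S) :
    sigmaSq p r i j s =
      Pop p i (fun s' => Vf p r (i+1) j s' ^ 2) s - Pop p i (Vf p r (i+1) j) s ^ 2 := by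
  unfold sigmaSq
  rw [if_pos hij]
  set b := Pop p i (Vf p r (i+1) j) s with hb
  have key : ∀ s', p i s s' * (Vf p r (i+1) j s' - b) ^ 2 =
      p i s s' * Vf p r (i+1) j s' ^ 2 - 2 * b * (p i s s' * Vf p r (i+1) j s') +
      b ^ 2 * p i s s' := fun s' => by ring
  rw [Finset.sum_congr rfl fun s' _ => key s']
  rw [Finset.sum_add_distrib, Finset.sum_sub_distrib, ← Finset.mul_sum, ← Finset.mul_sum,
    hp_sum i hi (by omega) s]
  show (Pop p i (fun s' => Vf p r (i+1) j s' ^ 2) s - 2 * b * b) + b ^ 2 * 1 = _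
  ring
variable {r : ℕ → S → ℝ} {p : ℕ → S → S → ℝ}

lemma Vf_diag (j : ℕ) (s : S) : Vf p r j j s = r j s := by
  rw [Vf]; simp

lemma Vf_step {i j : ℕ} (h : i < j) (s : S) :
    Vf p r i j s = r i s + Pop p i (Vf p r (i+1) j) s := by
  rw [Vf]; simp [h]

lemma Mf_diag (j : ℕ) (s : S) : Mf p r j j s = r j s ^ 2 := by
  rw [Mf]; simp

lemma Mf_step {i j : ℕ} (h : i < j) (s : S) :
    Mf p r i j s = r i s ^ 2 + 2 * r i s * Pop p i (Vf p r (i + 1) j) s +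
      Pop p i (Mf p r (i + 1) j) s := by
  rw [Mf]; simp [h]

lemma Varf_diag (j : ℕ) (s : S) : Varf p r j j s = 0 := by
  rw [Varf]; simp

lemma Varf_step {i j : ℕ} (h : i < j) (s : S) :
    Varf p r i j s = sigmaSq p r i j s + Pop p i (Varf p r (i + 1) j) s := by
  rw [Varf]; simp [h]
lemma Varf_eq (hp_sum : ∀ t, 1 ≤ t → t ≤ H → ∀ s, ∑ s', p t s s' = 1) :
    ∀ k i j, 1 ≤ i → i ≤ j → j ≤ H → j - i = k → ∀ s : S,
      Varf p r i j s = Mf p r i j s - Vf p r i j s ^ 2 := by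
  intro k
  induction k with
  | zero =>
    intro i j hi hij hj hk s
    have hij' : i = j := by omega
    subst hij'
    rw [Varf_diag, Mf_diag, Vf_diag]; ring
  | succ k ih =>
    intro i j hi hij hj hk s
    have hij' : i < j := by omega
    have IH := fun s => ih (i+1) j (by omega) (by omega) hj (by omega) s
    rw [Varf_step hij', Mf_step hij', Vf_step hij', sigmaSq_eq hp_sum hi hij' hj s]
    have h1 : Pop p i (Varf p r (i+1) j) s =
        Pop p i (fun s' => Mf p r (i+1) j s' - Vf p r (i+1) j s' ^ 2) s :=
      Pop_congr fun s' => IH s'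
    rw [h1, Pop_sub]
    ring

lemma Varf_nonneg (hp_nonneg : ∀ t, 1 ≤ t → t ≤ H → ∀ s s', 0 ≤ p t s s') :
    ∀ k i j, 1 ≤ i → i ≤ j → j ≤ H → j - i = k → ∀ s : S, 0 ≤ Varf p r i j s := by
  intro k
  induction k with
  | zero =>
    intro i j hi hij hj hk s
    have hij' : i = j := by omega
    subst hij'
    rw [Varf_diag]
  | succ k ih =>
    intro i j hi hij hj hk s
    have hij' : i < j := by omega
    have hiH : i ≤ H := by omega
    rw [Varf_step hij']
    exact add_nonneg (sigmaSq_nonneg hp_nonneg hi hj s)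
      (Pop_nonneg (hp_nonneg i hi hiH s)
        (fun s' => ih (i+1) j (by omega) (by omega) hj (by omega) s'))

lemma sum_eq_Varf :
    ∀ k i j, 1 ≤ i → i ≤ j → j ≤ H → j - i = k → ∀ s : S,
      ∑ t ∈ Finset.Icc i j, PC p i (t - 1) (sigmaSq p r t j) s = Varf p r i j s := by
  intro k
  induction k with
  | zero =>
    intro i j hi hij hj hk s
    have hij' : i = j := by omega
    subst hij'
    rw [Finset.Icc_self, Finset.sum_singleton, congrFun (PC_id (by omega) _) s,
      Varf_diag]
    simp [sigmaSq]
  | succ k ih =>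
    intro i j hi hij hj hk s
    have hij' : i < j := by omega
    have hsplit : Finset.Icc i j = insert i (Finset.Icc (i+1) j) := by
      ext x; simp only [Finset.mem_Icc, Finset.mem_insert]; omega
    rw [hsplit, Finset.sum_insert (by simp), congrFun (PC_id (by omega) _) s]
    have hrest : ∀ t ∈ Finset.Icc (i+1) j,
        PC p i (t - 1) (sigmaSq p r t j) s =
        Pop p i (PC p (i+1) (t - 1) (sigmaSq p r t j)) s := by
      intro t ht
      simp only [Finset.mem_Icc] at ht
      rw [PC_step (by omega)]
    rw [Finset.sum_congr rfl hrest, ← Pop_finsum]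
    have h2 : Pop p i (fun s' => ∑ t ∈ Finset.Icc (i+1) j,
        PC p (i+1) (t - 1) (sigmaSq p r t j) s') s = Pop p i (Varf p r (i+1) j) s :=
      Pop_congr fun s' => ih (i+1) j (by omega) (by omega) hj (by omega) s'
    rw [h2, Varf_step hij']
end Aux

/-- The total sum of propagated local variances is bounded by `(j-i+1)² r_max² ≤ H² r_max²`. -/
theorem sum_propagated_local_variances_bound
    {S : Type*} [Fintype S] [Nonempty S] (H : ℕ) (hH : 1 ≤ H)
    (r : ℕ → S → ℝ) (p : ℕ → S → S → ℝ)
    (hp_nonneg : ∀ t, 1 ≤ t → t ≤ H → ∀ s s', 0 ≤ p t s s')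
    (hp_sum : ∀ t, 1 ≤ t → t ≤ H → ∀ s, ∑ s', p t s s' = 1)
    (rmax : ℝ) (hrmax : 0 ≤ rmax)
    (hr : ∀ t, 1 ≤ t → t ≤ H → ∀ s : S, 0 ≤ r t s ∧ r t s ≤ rmax)
    (i j : ℕ) (hi : 1 ≤ i) (hij : i ≤ j) (hj : j ≤ H) (s : S) :
    0 ≤ ∑ t ∈ Finset.Icc i j, PC p i (t - 1) (sigmaSq p r t j) s ∧
    ∑ t ∈ Finset.Icc i j, PC p i (t - 1) (sigmaSq p r t j) s ≤
      ((j - i + 1 : ℕ) : ℝ) ^ 2 * rmax ^ 2 ∧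
    ((j - i + 1 : ℕ) : ℝ) ^ 2 * rmax ^ 2 ≤ (H : ℝ) ^ 2 * rmax ^ 2 := by
  rw [sum_eq_Varf (H := H) (j - i) i j hi hij hj rfl s]
  refine ⟨Varf_nonneg hp_nonneg (j - i) i j hi hij hj rfl s, ?_, ?_⟩
  · rw [Varf_eq hp_sum (j - i) i j hi hij hj rfl s]
    have hM := (Mf_bound hp_nonneg hp_sum hrmax hr (j - i) i j hi hij hj rfl s).2
    have hV := sq_nonneg (Vf p r i j s)
    have hb : (((j - i + 1 : ℕ) : ℝ) * rmax) ^ 2 =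
        ((j - i + 1 : ℕ) : ℝ) ^ 2 * rmax ^ 2 := by ring
    linarith
  · have hle : ((j - i + 1 : ℕ) : ℝ) ≤ (H : ℝ) := by
      exact_mod_cast Nat.cast_le.mpr (show j - i + 1 ≤ H by omega)
    exact mul_le_mul_of_nonneg_right
      (pow_le_pow_left₀ (by positivity) hle 2) (sq_nonneg rmax)
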